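/- Let u, v be jointly Gaussian standard normal random variables with correlation ρ = Cov(u,v), and let s be a random variable independent of (u,v). Then E[Sign(s+u)·v] = ρ·E[Sign(s+u)·u]. -/

import Mathlib

open MeasureTheory ProbabilityTheory

/-- The sign function: `Sign x = x / |x|` for `x ≠ 0`, `Sign 0 = 0`. -/
noncomputable def signFun (x : ℝ) : ℝ := if x = 0 then 0 else x / |x|

lemma measurable_signFun : Measurable signFun := by
  unfold signFun
  exact Measurable.ite (measurableSet_eq_fun measurable_id measurable_const)
    measurable_const (measurable_id.div measurable_id.abs)

lemma abs_signFun_le (x : ℝ) : |signFun x| ≤ 1 := by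
  unfold signFun
  rcases eq_or_ne x 0 with h | h
  · simp [h]
  · rw [if_neg h, abs_div, abs_abs, div_self (abs_ne_zero.2 h)]

lemma integrable_id_gaussianReal : Integrable (fun x : ℝ => x) (gaussianReal 0 1) := by
  rw [gaussianReal_of_var_ne_zero 0 one_ne_zero, gaussianPDF_def]
  rw [MeasureTheory.integrable_withDensity_iff]
  · have h1 : Integrable (fun x : ℝ => x ^ (1 : ℝ) * Real.exp (-(2⁻¹) * x ^ 2)) :=
      integrable_rpow_mul_exp_neg_mul_sq (b := 2⁻¹) (s := 1) (by norm_num) (by norm_num)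
    simp only [Real.rpow_one] at h1
    refine ((h1.abs.const_mul ((Real.sqrt (2 * Real.pi))⁻¹)).mono'
      ?_ (Filter.Eventually.of_forall fun x => ?_))
    · exact (measurable_id.mul ((ProbabilityTheory.measurable_gaussianPDFReal 0
        1).ennreal_ofReal.ennreal_toReal)).aestronglyMeasurable
    · have hnn := ProbabilityTheory.gaussianPDFReal_nonneg 0 1 x
      rw [Real.norm_eq_abs, abs_mul, ENNReal.toReal_ofReal hnn, abs_of_nonneg hnn]
      simp only [ProbabilityTheory.gaussianPDFReal, NNReal.coe_one, mul_one, sub_zero,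
        Real.rpow_one]
      refine le_of_eq ?_
      rw [abs_mul, abs_of_pos (Real.exp_pos _)]
      have hxe : -x ^ 2 / 2 = -(2⁻¹) * x ^ 2 := by ring
      rw [hxe]
      ring
  · exact (ProbabilityTheory.measurable_gaussianPDFReal 0 1).ennreal_ofReal
  · exact Filter.Eventually.of_forall fun x => ENNReal.ofReal_lt_top

lemma integral_id_gaussianReal_zero : ∫ x, x ∂(gaussianReal 0 1) = 0 := by
  have hmap : (gaussianReal 0 1).map (fun x : ℝ => -x) = gaussianReal 0 1 := by
    have heq : (fun x : ℝ => -x) = (fun x : ℝ => (-1 : ℝ) * x) := by funext x; ring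
    rw [heq, ProbabilityTheory.gaussianReal_map_const_mul]
    have h2 : (⟨(-1 : ℝ) ^ 2, sq_nonneg _⟩ : NNReal) = 1 := by ext; norm_num
    congr 1
    · simp
    · ext; simp
  have h1 : ∫ x, x ∂(gaussianReal 0 1) = ∫ x, -x ∂(gaussianReal 0 1) := by
    calc ∫ x, x ∂(gaussianReal 0 1)
        = ∫ x, x ∂((gaussianReal 0 1).map (fun x : ℝ => -x)) := by rw [hmap]
      _ = ∫ x, -x ∂(gaussianReal 0 1) :=
          integral_map measurable_neg.aemeasurable measurable_id.aestronglyMeasurable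
  rw [integral_neg] at h1
  linarith

/-- Let `u, v` be jointly Gaussian standard normal random variables with correlation
`ρ = Cov(u,v)` (encoded via the decomposition `v = ρ u + √(1-ρ²) w` with `w` a standard
Gaussian independent of `u`), and let `s` be independent of `(u,v)`.  Then
`E[Sign(s+u)·v] = ρ · E[Sign(s+u)·u]`. -/
theorem sign_jointly_gaussian_correlation
    {Ω : Type*} [MeasurableSpace Ω] (μ : Measure Ω) [IsProbabilityMeasure μ]
    (u w s : Ω → ℝ) (ρ : ℝ) (hρ : |ρ| ≤ 1)
    (hum : Measurable u) (hwm : Measurable w) (hsm : Measurable s)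
    (hu : μ.map u = gaussianReal 0 1) (hw : μ.map w = gaussianReal 0 1)
    (hind : iIndepFun ![u, w, s] μ)
    (v : Ω → ℝ) (hv : ∀ ω, v ω = ρ * u ω + Real.sqrt (1 - ρ ^ 2) * w ω) :
    ∫ ω, signFun (s ω + u ω) * v ω ∂μ = ρ * ∫ ω, signFun (s ω + u ω) * u ω ∂μ := by
  set h : Ω → ℝ := fun ω => signFun (s ω + u ω) with hh
  have hhm : Measurable h := measurable_signFun.comp (hsm.add hum)
  have hhb : ∀ ω, ‖h ω‖ ≤ 1 := fun ω => abs_signFun_le _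
  have hui : Integrable u μ := by
    have h0 : Integrable (fun x : ℝ => x) (μ.map u) := hu ▸ integrable_id_gaussianReal
    simpa using (integrable_map_measure measurable_id.aestronglyMeasurable
      hum.aemeasurable).mp h0
  have hwi : Integrable w μ := by
    have h0 : Integrable (fun x : ℝ => x) (μ.map w) := hw ▸ integrable_id_gaussianReal
    simpa using (integrable_map_measure measurable_id.aestronglyMeasurable
      hwm.aemeasurable).mp h0
  have hw0 : ∫ ω, w ω ∂μ = 0 := by
    have h0 := integral_map (μ := μ) (φ := w) (f := fun x : ℝ => x) hwm.aemeasurable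
      measurable_id.aestronglyMeasurable
    rw [hw, integral_id_gaussianReal_zero] at h0
    exact h0.symm
  have hpair : IndepFun (fun ω => (u ω, s ω)) w μ := by
    have hmeas : ∀ i, Measurable (![u, w, s] i) := by
      intro i
      fin_cases i <;> simpa using by first | exact hum | exact hwm | exact hsm
    have := hind.indepFun_prodMk hmeas 0 2 1 (by decide) (by decide)
    simpa using this
  have hindep : IndepFun h w μ := by
    have heq : h = (fun p : ℝ × ℝ => signFun (p.2 + p.1)) ∘ (fun ω => (u ω, s ω)) := rfl
    rw [heq]
    exact hpair.comp (measurable_signFun.comp (measurable_snd.add measurable_fst)) measurable_id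
  have hzero : ∫ ω, h ω * w ω ∂μ = 0 := by
    have h0 := hindep.integral_fun_mul_eq_mul_integral hhm.aestronglyMeasurable hwm.aestronglyMeasurable
    simpa [Pi.mul_apply, hw0] using h0
  have hihu : Integrable (fun ω => h ω * u ω) μ :=
    hui.bdd_mul hhm.aestronglyMeasurable (Filter.Eventually.of_forall hhb)
  have hihw : Integrable (fun ω => h ω * w ω) μ :=
    hwi.bdd_mul hhm.aestronglyMeasurable (Filter.Eventually.of_forall hhb)
  have hsplit : ∀ ω, h ω * v ω
      = ρ * (h ω * u ω) + Real.sqrt (1 - ρ ^ 2) * (h ω * w ω) := fun ω => by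
    rw [hv]; ring
  calc ∫ ω, h ω * v ω ∂μ
      = ∫ ω, (ρ * (h ω * u ω) + Real.sqrt (1 - ρ ^ 2) * (h ω * w ω)) ∂μ :=
        integral_congr_ae (Filter.Eventually.of_forall hsplit)
    _ = ρ * ∫ ω, h ω * u ω ∂μ + Real.sqrt (1 - ρ ^ 2) * ∫ ω, h ω * w ω ∂μ := by
        rw [integral_add (hihu.const_mul ρ) (hihw.const_mul _), integral_const_mul,
          integral_const_mul]
    _ = ρ * ∫ ω, h ω * u ω ∂μ := by rw [hzero, mul_zero, add_zero]
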